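/- Let F be a weakly b-linear k-CNF formula (b ≥ 1), and let ℓ be the number of literals occurring in at least f_occ(k−b)+1 clauses of F. If C(ℓ−1, b) ≤ f_occ(k−b), then F is satisfiable. -/

import Mathlib

abbrev Var := ℕ
abbrev Lit := Var × Bool
abbrev Clause := Finset Lit
abbrev CNF := Finset Clause

/-- A clause is valid if it does not contain a variable together with its negation. -/
def Clause.valid (C : Clause) : Prop := ∀ x : Var, ¬(((x, true) ∈ C) ∧ ((x, false) ∈ C))

/-- The set of variables of a clause. -/
def vbl (C : Clause) : Finset Var := C.image Prod.fst

/-- A `k`-CNF formula: every clause is valid and has exactly `k` literals. -/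
def IsKCNF (k : ℕ) (F : CNF) : Prop := ∀ C ∈ F, Clause.valid C ∧ C.card = k

/-- A CNF formula is linear if any two distinct clauses share at most one variable. -/
def LinearCNF (F : CNF) : Prop := ∀ C ∈ F, ∀ D ∈ F, C ≠ D → (vbl C ∩ vbl D).card ≤ 1

/-- A CNF formula is weakly linear if any two distinct clauses share at most one literal. -/
def WeaklyLinear (F : CNF) : Prop := ∀ C ∈ F, ∀ D ∈ F, C ≠ D → (C ∩ D).card ≤ 1

/-- An assignment satisfies a formula if every clause contains a true literal. -/
def Satisfies (α : Var → Bool) (F : CNF) : Prop := ∀ C ∈ F, ∃ l ∈ C, α l.1 = l.2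

def Unsat (F : CNF) : Prop := ¬ ∃ α, Satisfies α F
/-- The number of clauses of `F` containing the literal `u`. -/
def occCount (F : CNF) (u : Lit) : ℕ := (F.filter (fun C => u ∈ C)).card

/-- `focc j` is the largest `d` such that every `j`-CNF formula in which every
literal occurs in at most `d` clauses is satisfiable. -/
noncomputable def focc (j : ℕ) : ℕ :=
  sSup {d : ℕ | ∀ F : CNF, IsKCNF j F → (∀ u : Lit, occCount F u ≤ d) → ∃ α, Satisfies α F}

/-- A CNF formula is weakly `b`-linear if any two distinct clauses share at
most `b` literals. -/
def WeaklyBLinear (b : ℕ) (F : CNF) : Prop :=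
  ∀ C ∈ F, ∀ D ∈ F, C ≠ D → (C ∩ D).card ≤ b

/-- Let `F` be a weakly `b`-linear `k`-CNF formula and let `ℓ` be the number
of literals occurring in at least `focc(k-b)+1` clauses. If
`C(ℓ-1, b) ≤ focc(k-b)`, then `F` is satisfiable. -/
def gAux (j : ℕ) (f : Fin j → Bool) : Clause :=
  (Finset.univ : Finset (Fin j)).image (fun i => (i.val, f i))

def Ffull (j : ℕ) : CNF := (Finset.univ : Finset (Fin j → Bool)).image (gAux j)

lemma Ffull_kcnf (j : ℕ) : IsKCNF j (Ffull j) := by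
  intro C hC
  simp only [Ffull, Finset.mem_image] at hC
  obtain ⟨f, -, rfl⟩ := hC
  have hginj : Function.Injective (fun i : Fin j => (i.val, f i)) := by
    intro i i' h
    simp only [Prod.mk.injEq] at h
    exact Fin.val_injective h.1
  constructor
  · intro x hx
    simp only [gAux, Finset.mem_image, Finset.mem_univ, true_and, Prod.mk.injEq] at hx
    obtain ⟨⟨i, hi1, hi2⟩, ⟨i', hi1', hi2'⟩⟩ := hx
    have : i = i' := Fin.val_injective (hi1.trans hi1'.symm)
    subst this
    rw [hi2] at hi2'; exact Bool.true_eq_false.mp hi2'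
  · rw [gAux, Finset.card_image_of_injective _ hginj, Finset.card_univ, Fintype.card_fin]

lemma Ffull_unsat (j : ℕ) : ¬ ∃ α, Satisfies α (Ffull j) := by
  rintro ⟨α, hα⟩
  obtain ⟨l, hl, hαl⟩ := hα (gAux j (fun i => !(α i.val)))
    (Finset.mem_image_of_mem _ (Finset.mem_univ _))
  simp only [gAux, Finset.mem_image, Finset.mem_univ, true_and] at hl
  obtain ⟨i, rfl⟩ := hl
  simp at hαl

lemma focc_spec (j : ℕ) (hj : 1 ≤ j) :
    ∀ F : CNF, IsKCNF j F → (∀ u : Lit, occCount F u ≤ focc j) → ∃ α, Satisfies α F := by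
  set S := {d : ℕ | ∀ F : CNF, IsKCNF j F → (∀ u : Lit, occCount F u ≤ d) → ∃ α, Satisfies α F}
    with hS
  have h0 : (0 : ℕ) ∈ S := by
    intro F hF hocc
    have hFe : F = ∅ := by
      by_contra h
      obtain ⟨C, hC⟩ := Finset.nonempty_iff_ne_empty.mpr h
      have hcard := (hF C hC).2
      obtain ⟨u, hu⟩ : C.Nonempty := Finset.card_pos.mp (by omega)
      have h1 : 1 ≤ occCount F u :=
        Finset.card_pos.mpr ⟨C, Finset.mem_filter.mpr ⟨hC, hu⟩⟩
      have := hocc u; omega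
    exact ⟨fun _ => true, by simp [hFe, Satisfies]⟩
  have hbdd : BddAbove S := by
    refine ⟨(Ffull j).card, fun d hd => ?_⟩
    by_contra hlt
    push_neg at hlt
    refine Ffull_unsat j (hd (Ffull j) (Ffull_kcnf j) fun u => ?_)
    calc occCount (Ffull j) u ≤ (Ffull j).card := Finset.card_filter_le _ _
      _ ≤ d := hlt.le
  exact Nat.sSup_mem ⟨0, h0⟩ hbdd

lemma focc_zero : focc 0 = 0 := by
  have : {d : ℕ | ∀ F : CNF, IsKCNF 0 F → (∀ u : Lit, occCount F u ≤ d) → ∃ α, Satisfies α F}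
      = ∅ := by
    ext d
    simp only [Set.mem_setOf_eq, Set.mem_empty_iff_false, iff_false]
    intro h
    obtain ⟨α, hα⟩ := h {∅}
      (by intro C hC; simp only [Finset.mem_singleton] at hC; subst hC
          exact ⟨fun x hx => by simp at hx, rfl⟩)
      (by intro u; simp [occCount, Finset.filter_singleton])
    obtain ⟨l, hl, -⟩ := hα ∅ (Finset.mem_singleton_self _)
    simp at hl
  rw [focc, this, csSup_empty]; rfl

theorem stmt18 (k b : ℕ) (hb : 1 ≤ b) (hbk : b ≤ k)
    (F : CNF) (hF : IsKCNF k F) (hbl : WeaklyBLinear b F)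
    (hcond :
      ((((F.biUnion id).filter
          (fun u => focc (k - b) + 1 ≤ occCount F u)).card - 1).choose b)
        ≤ focc (k - b)) :
    ∃ α, Satisfies α F := by
  set d := focc (k - b) with hd
  set L := (F.biUnion id).filter (fun u => focc (k - b) + 1 ≤ occCount F u) with hL
  -- membership in L
  have hmemL : ∀ u : Lit, d + 1 ≤ occCount F u → u ∈ L := by
    intro u hu
    have h1 : 1 ≤ occCount F u := by omega
    obtain ⟨C, hC⟩ := Finset.card_pos.mp h1
    rw [Finset.mem_filter] at hC
    refine Finset.mem_filter.mpr ⟨Finset.mem_biUnion.mpr ⟨C, hC.1, hC.2⟩, hu⟩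
  have hLhigh : ∀ u ∈ L, d + 1 ≤ occCount F u := by
    intro u hu; exact (Finset.mem_filter.mp hu).2
  by_cases hkb : k = b
  · -- degenerate case k = b : focc 0 = 0, ℓ ≤ b, F has at most one clause
    subst hkb
    have hd0 : d = 0 := by rw [hd, Nat.sub_self, focc_zero]
    have hch : L.card - 1 < k := Nat.choose_eq_zero_iff.mp (Nat.le_zero.mp (hd0 ▸ hcond))
    rcases Finset.eq_empty_or_nonempty F with rfl | ⟨C0, hC0⟩
    · exact ⟨fun _ => true, by simp [Satisfies]⟩
    · have hC0sub : C0 ⊆ L := by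
        intro u hu
        refine hmemL u ?_
        have h1 : 1 ≤ occCount F u := by
          rw [occCount]
          exact Finset.card_pos.mpr ⟨C0, Finset.mem_filter.mpr ⟨hC0, hu⟩⟩
        omega
      have hC0card : C0.card = k := (hF C0 hC0).2
      have hLcard : L.card ≤ k := by
        have := Finset.card_le_card hC0sub
        omega
      have hC0eq : C0 = L := Finset.eq_of_subset_of_card_le hC0sub (by omega)
      obtain ⟨l, hl⟩ : C0.Nonempty := Finset.card_pos.mp (by omega)
      refine ⟨fun x => if x = l.1 then l.2 else true, ?_⟩
      intro C hC
      have hCeq : C = C0 := by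
        have hsub : C ⊆ L := by
          intro u hu
          refine hmemL u ?_
          have h1 : 1 ≤ occCount F u := by
            rw [occCount]
            exact Finset.card_pos.mpr ⟨C, Finset.mem_filter.mpr ⟨hC, hu⟩⟩
          omega
        rw [← hC0eq] at hsub
        exact Finset.eq_of_subset_of_card_le hsub (by rw [hC0card, (hF C hC).2])
      subst hCeq
      exact ⟨l, hl, by simp⟩
  -- main case : 1 ≤ k - b
  have hj : 1 ≤ k - b := by omega
  -- choose the removed sets B C
  have hBex : ∀ C : Clause, ∃ B : Clause, C ∈ F →
      B ⊆ C ∧ B.card = b ∧ ((C ∩ L).card ≤ b → C ∩ L ⊆ B) ∧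
        (b ≤ (C ∩ L).card → B ⊆ C ∩ L) := by
    intro C
    by_cases hCF : C ∈ F
    · have hCcard : C.card = k := (hF C hCF).2
      rcases le_or_gt (C ∩ L).card b with h1 | h2
      · obtain ⟨B, hB1, hB2, hB3⟩ :=
          Finset.exists_subsuperset_card_eq (Finset.inter_subset_left) h1 (by omega)
        exact ⟨B, fun _ => ⟨hB2, hB3, fun _ => hB1, fun h => by
          have heq : C ∩ L = B := Finset.eq_of_subset_of_card_le hB1 (by omega)
          rw [← heq]⟩⟩
      · obtain ⟨B, hB1, hB2⟩ := Finset.exists_subset_card_eq h2.le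
        exact ⟨B, fun _ => ⟨hB1.trans Finset.inter_subset_left, hB2,
          fun h => by omega, fun _ => hB1⟩⟩
    · exact ⟨∅, fun h => absurd h hCF⟩
  choose B hB using hBex
  set F' : CNF := F.image (fun C => C \ B C) with hF'
  have hF'k : IsKCNF (k - b) F' := by
    intro C' hC'
    rw [hF', Finset.mem_image] at hC'
    obtain ⟨C, hC, rfl⟩ := hC'
    obtain ⟨hBsub, hBcard, -, -⟩ := hB C hC
    constructor
    · intro x hx
      exact (hF C hC).1 x ⟨(Finset.mem_sdiff.mp hx.1).1, (Finset.mem_sdiff.mp hx.2).1⟩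
    · rw [Finset.card_sdiff_of_subset hBsub, hBcard, (hF C hC).2]
  have hF'occ : ∀ u : Lit, occCount F' u ≤ d := by
    intro u
    have himg : occCount F' u ≤ (F.filter (fun C => u ∈ C \ B C)).card := by
      rw [occCount, hF', Finset.filter_image]
      exact Finset.card_image_le
    by_cases huL : u ∈ L
    · -- heavy literal : count via injection into powersetCard b (L.erase u)
      have hkey : (F.filter (fun C => u ∈ C \ B C)).card ≤
          (Finset.powersetCard b (L.erase u)).card := by
        apply Finset.card_le_card_of_injOn B
        · intro C hC
          rw [Finset.mem_coe, Finset.mem_filter] at hC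
          obtain ⟨hCF, huC⟩ := hC
          rw [Finset.mem_sdiff] at huC
          obtain ⟨huC, huB⟩ := huC
          obtain ⟨hBsub, hBcard, hB3, hB4⟩ := hB C hCF
          have huCL : u ∈ C ∩ L := Finset.mem_inter.mpr ⟨huC, huL⟩
          have hblt : b ≤ (C ∩ L).card := by
            by_contra h
            push_neg at h
            exact huB (hB3 h.le huCL)
          rw [Finset.mem_coe, Finset.mem_powersetCard]
          refine ⟨fun v hv => ?_, hBcard⟩
          refine Finset.mem_erase.mpr ⟨?_, (Finset.mem_inter.mp (hB4 hblt hv)).2⟩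
          rintro rfl
          exact huB hv
        · intro C hC D hD hBCD
          by_contra hne
          rw [Finset.mem_coe, Finset.mem_filter] at hC hD
          obtain ⟨hCF, huC⟩ := hC
          obtain ⟨hDF, huD⟩ := hD
          rw [Finset.mem_sdiff] at huC huD
          have hins : insert u (B C) ⊆ C ∩ D := by
            intro v hv
            rcases Finset.mem_insert.mp hv with rfl | hv
            · exact Finset.mem_inter.mpr ⟨huC.1, huD.1⟩
            · refine Finset.mem_inter.mpr ⟨(hB C hCF).1 hv, ?_⟩
              rw [hBCD] at hv
              exact (hB D hDF).1 hv
          have hcard : b + 1 ≤ (C ∩ D).card := by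
            have h1 := Finset.card_le_card hins
            rw [Finset.card_insert_of_notMem huC.2, (hB C hCF).2.1] at h1
            omega
          have := hbl C hCF D hDF hne
          omega
      calc occCount F' u ≤ (Finset.powersetCard b (L.erase u)).card :=
            himg.trans hkey
        _ = (L.card - 1).choose b := by
            rw [Finset.card_powersetCard, Finset.card_erase_of_mem huL]
        _ ≤ d := hcond
    · -- light literal
      have hocc : occCount F u ≤ d := by
        by_contra h
        push_neg at h
        exact huL (hmemL u h)
      refine himg.trans (le_trans ?_ hocc)
      apply Finset.card_le_card
      intro C hC
      rw [Finset.mem_filter] at hC ⊢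
      exact ⟨hC.1, (Finset.mem_sdiff.mp hC.2).1⟩
  obtain ⟨α, hα⟩ := focc_spec (k - b) hj F' hF'k hF'occ
  refine ⟨α, fun C hC => ?_⟩
  obtain ⟨l, hl, hαl⟩ := hα (C \ B C) (Finset.mem_image_of_mem _ hC)
  exact ⟨l, (Finset.mem_sdiff.mp hl).1, hαl⟩
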